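/- Let k be a field containing a primitive n-th root of unity, where n is invertible in k. Let c ∈ k^× and let m be the order of the image of c in the quotient group k^×/(k^×)^n. Then the polynomial T^n − c factors in k[T] as the product of n/m irreducible factors, each of degree m; explicitly, T^n − c = ∏_{g} (T^m − g), where g ranges over the n/m elements of k^× satisfying g^{n/m} = c. -/

import Mathlib

open Polynomial

private lemma kummer_aux_prod {K : Type*} [CommMonoid K] (α δ : K) (R : Multiset K)
    (h : ∀ β ∈ R, ∃ i : ℕ, β = α * δ ^ i) :
    ∃ j : ℕ, R.prod = α ^ Multiset.card R * δ ^ j := by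
  induction R using Multiset.induction with
  | empty => exact ⟨0, by simp⟩
  | cons β R ih =>
    obtain ⟨j, hj⟩ := ih (fun β hβ => h β (Multiset.mem_cons_of_mem hβ))
    obtain ⟨i, hi⟩ := h β (Multiset.mem_cons_self _ _)
    refine ⟨i + j, ?_⟩
    rw [Multiset.prod_cons, hj, hi, Multiset.card_cons, pow_succ, pow_add,
      mul_mul_mul_comm, mul_comm α]

/-- Key irreducibility step of the Kummer factorization. -/
private lemma kummer_key_irred {k : Type*} [Field k] {n m d : ℕ} (hn : 0 < n) {ζ : k}
    (hζ : IsPrimitiveRoot ζ n) (c : kˣ) (hmd : m * d = n) (hm0 : 0 < m)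
    (hmin : ∀ (r : ℕ) (w : k), w ≠ 0 → w ^ n = (c : k) ^ r → m ∣ r)
    {g : k} (hg : g ^ d = (c : k)) :
    Irreducible (X ^ m - C g : k[X]) := by
  have hc0 : (c : k) ≠ 0 := c.ne_zero
  have hζ0 : ζ ≠ 0 := hζ.ne_zero hn.ne'
  set p : k[X] := X ^ m - C g with hp_def
  have hp_monic : p.Monic := monic_X_pow_sub_C g hm0.ne'
  have hp_ne : p ≠ 0 := hp_monic.ne_zero
  have hp_deg : p.natDegree = m := natDegree_X_pow_sub_C
  obtain ⟨q, hq_monic, hq_irr, hq_dvd⟩ := p.exists_monic_irreducible_factor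
    (not_isUnit_of_natDegree_pos p (by rw [hp_deg]; exact hm0))
  -- p divides X^n - C c
  have hpdvd : p ∣ (X ^ n - C (c : k)) := by
    have : (X : k[X]) ^ m - C g ∣ ((X : k[X]) ^ m) ^ d - (C g) ^ d :=
      sub_dvd_pow_sub_pow _ _ d
    rwa [← pow_mul, hmd, ← C_pow, hg] at this
  have hqn : q ∣ (X ^ n - C (c : k)) := hq_dvd.trans hpdvd
  -- work in K = AdjoinRoot q
  haveI : Fact (Irreducible q) := ⟨hq_irr⟩
  set K := AdjoinRoot q
  set φ : k →+* K := algebraMap k K with hφ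
  have hφinj : Function.Injective φ := φ.injective
  set α : K := AdjoinRoot.root q with hα
  have hαp : α ^ m = φ g := by
    obtain ⟨t, ht⟩ := hq_dvd
    have h0 : p.eval₂ φ α = 0 := by
      rw [ht, eval₂_mul, hφ, AdjoinRoot.algebraMap_eq, AdjoinRoot.eval₂_root, zero_mul]
    rw [hp_def, eval₂_sub, eval₂_pow, eval₂_X, eval₂_C, sub_eq_zero] at h0
    exact h0
  have hαn : α ^ n = φ (c : k) := by
    rw [← hmd, pow_mul, hαp, ← map_pow, hg]
  have hα0 : α ≠ 0 := by
    intro h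
    rw [h, zero_pow hn.ne'] at hαn
    exact hc0 (hφinj (by rw [map_zero, hαn]))
  -- the primitive root in K
  have hζK : IsPrimitiveRoot (φ ζ) n := hζ.map_of_injective hφinj
  -- q.map φ splits
  have hqmap_dvd : q.map φ ∣ (X ^ n - C (φ (c : k))) := by
    have := Polynomial.map_dvd φ hqn
    rwa [Polynomial.map_sub, Polynomial.map_pow, map_X, map_C] at this
  have hsplit_big : Splits (X ^ n - C (φ (c : k)) : K[X]) := by
    rw [X_pow_sub_C_eq_prod hζK hn hαn]
    exact Splits.prod (fun i _ => Splits.X_sub_C _)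
  have hbig_ne : (X ^ n - C (φ (c : k)) : K[X]) ≠ 0 :=
    (monic_X_pow_sub_C _ hn.ne').ne_zero
  have hq_splits : Splits (q.map φ) :=
    hsplit_big.of_dvd hbig_ne hqmap_dvd
  set r : ℕ := q.natDegree with hr
  have hr_pos : 0 < r := hq_irr.natDegree_pos
  have hr_le : r ≤ m := by
    have := natDegree_le_of_dvd hq_dvd hp_ne
    rwa [hp_deg] at this
  have hqK_monic : (q.map φ).Monic := hq_monic.map φ
  set R : Multiset K := (q.map φ).roots with hR
  have hqK_eq : q.map φ = (R.map fun a => X - C a).prod :=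
    hq_splits.eq_prod_roots_of_monic hqK_monic
  have hcardR : Multiset.card R = r := by
    rw [hR, splits_iff_card_roots.mp hq_splits, natDegree_map]
  -- each root is α times a power of φ ζ
  haveI : NeZero n := ⟨hn.ne'⟩
  have hroots : ∀ β ∈ R, ∃ i : ℕ, β = α * (φ ζ) ^ i := by
    intro β hβ
    have hβroot : β ^ n = φ (c : k) := by
      have h1 : (q.map φ).eval β = 0 := (mem_roots hqK_monic.ne_zero).mp hβ
      have h2 : (X ^ n - C (φ (c : k)) : K[X]).eval β = 0 := by
        obtain ⟨t, ht⟩ := hqmap_dvd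
        rw [ht, eval_mul, h1, zero_mul]
      rwa [eval_sub, eval_pow, eval_X, eval_C, sub_eq_zero] at h2
    have hξ : (β * α⁻¹) ^ n = 1 := by
      rw [mul_pow, hβroot, inv_pow, hαn, mul_inv_cancel₀]
      rw [← hαn]
      exact pow_ne_zero _ hα0
    obtain ⟨i, _, hi⟩ := hζK.eq_pow_of_pow_eq_one hξ
    exact ⟨i, by rw [hi, mul_comm β, ← mul_assoc, mul_inv_cancel₀ hα0, one_mul]⟩
  obtain ⟨j, hj⟩ := kummer_aux_prod α (φ ζ) R hroots
  -- evaluate at 0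
  have heval : φ (q.eval 0) = (-1) ^ r * (α ^ r * (φ ζ) ^ j) := by
    have h1 : φ (q.eval 0) = (q.map φ).eval 0 := by
      rw [eval_map, eval₂_at_zero, coeff_zero_eq_eval_zero]
    rw [h1, hqK_eq, eval_multiset_prod, Multiset.map_map]
    have : (R.map fun a => (X - C a).eval 0).prod = ((R.map fun a => -a)).prod := by
      congr 1
      apply Multiset.map_congr rfl
      intro a _
      simp
    rw [Function.comp_def, this, Multiset.prod_map_neg, hj, hcardR]
  -- extract α ^ r = φ w
  set w : k := (-1) ^ r * q.eval 0 * (ζ ^ j)⁻¹ with hw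
  have hζj : (φ ζ) ^ j ≠ 0 := pow_ne_zero _ (fun h => hζ0 (hφinj (by rw [map_zero, h])))
  have hαr : α ^ r = φ w := by
    have hneg : ((-1 : K)) ^ r * (-1 : K) ^ r = 1 := by
      rw [← pow_add, ← two_mul, pow_mul, neg_one_sq, one_pow]
    have h2 : ((-1 : K)) ^ r * φ (q.eval 0) = α ^ r * (φ ζ) ^ j := by
      rw [heval, ← mul_assoc, hneg, one_mul]
    rw [hw]
    simp only [map_mul, map_pow, map_inv₀, map_neg, map_one]
    rw [h2, mul_inv_cancel_right₀ hζj]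
  have hw0 : w ≠ 0 := by
    intro h
    rw [h, map_zero] at hαr
    exact pow_ne_zero r hα0 hαr
  have hwn : w ^ n = (c : k) ^ r := by
    apply hφinj
    rw [map_pow, ← hαr, ← pow_mul, mul_comm r n, pow_mul, hαn, ← map_pow, map_pow]
  have hmr : m ∣ r := hmin r w hw0 hwn
  have hrm : r = m := le_antisymm hr_le (Nat.le_of_dvd hr_pos hmr)
  -- q = p
  have hqp : q = p := by
    obtain ⟨t, ht⟩ := hq_dvd
    have ht0 : t ≠ 0 := by
      intro h; rw [h, mul_zero] at ht; exact hp_ne ht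
    have hdeg : t.natDegree = 0 := by
      have := congrArg natDegree ht
      rw [natDegree_mul hq_irr.ne_zero ht0, hp_deg, ← hr, hrm] at this
      omega
    obtain ⟨u, rfl⟩ := natDegree_eq_zero.mp hdeg
    have hu : u = 1 := by
      have := hp_monic
      rw [ht] at this
      have h2 := this.leadingCoeff
      rw [leadingCoeff_mul, hq_monic.leadingCoeff, one_mul, leadingCoeff_C] at h2
      exact h2
    rw [ht, hu, map_one, mul_one]
  rw [← hqp]
  exact hq_irr

/-- Kummer factorization: if `k` contains a primitive `n`-th root of unity and `c ∈ kˣ`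
has image of order `m` in `kˣ/(kˣ)ⁿ`, then `T^n - c` is the product of the `n/m`
irreducible factors `T^m - g`, where `g` ranges over the elements with `g^(n/m) = c`. -/
theorem kummer_factorization {k : Type*} [Field k] (n : ℕ) (hn : 0 < n)
    (hn' : (n : k) ≠ 0) (ζ : k) (hζ : IsPrimitiveRoot ζ n) (c : kˣ) (m : ℕ)
    (hm : m = orderOf (QuotientGroup.mk c : kˣ ⧸ (powMonoidHom n : kˣ →* kˣ).range)) :
    ∃ S : Finset k, S.card = n / m ∧
      (∀ g : k, g ∈ S ↔ g ^ (n / m) = (c : k)) ∧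
      (X ^ n - C (c : k) : k[X]) = ∏ g ∈ S, (X ^ m - C g) ∧
      ∀ g ∈ S, Irreducible (X ^ m - C g : k[X]) := by
  classical
  set Q := (powMonoidHom n : kˣ →* kˣ).range with hQ
  set x : kˣ ⧸ Q := QuotientGroup.mk c with hx_def
  have hmem : ∀ y : kˣ, (QuotientGroup.mk y : kˣ ⧸ Q) = 1 ↔ ∃ b : kˣ, b ^ n = y := by
    intro y
    rw [QuotientGroup.eq_one_iff]
    exact ⟨fun ⟨b, hb⟩ => ⟨b, hb⟩, fun ⟨b, hb⟩ => ⟨b, hb⟩⟩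
  have hxn : x ^ n = 1 := by
    rw [hx_def, ← QuotientGroup.mk_pow, hmem]
    exact ⟨c, rfl⟩
  have hmn : m ∣ n := hm ▸ orderOf_dvd_of_pow_eq_one hxn
  have hm0 : 0 < m := Nat.pos_of_ne_zero (fun h => by
    subst h; exact hn.ne' (Nat.eq_zero_of_zero_dvd hmn))
  set d := n / m with hd_def
  have hmd : m * d = n := Nat.mul_div_cancel' hmn
  have hd0 : 0 < d := Nat.pos_of_ne_zero (fun h => by rw [h, mul_zero] at hmd; exact hn.ne' hmd.symm)
  -- key divisibility criterion
  have hmin : ∀ (r : ℕ) (w : k), w ≠ 0 → w ^ n = (c : k) ^ r → m ∣ r := by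
    intro r w hw0 hwn
    have hwu : (Units.mk0 w hw0) ^ n = c ^ r := by
      ext; push_cast; exact hwn
    have : x ^ r = 1 := by
      rw [hx_def, ← QuotientGroup.mk_pow, hmem]
      exact ⟨Units.mk0 w hw0, hwu⟩
    exact hm ▸ orderOf_dvd_of_pow_eq_one this
  -- existence of a d-th root of c
  have hg₀ : ∃ g₀ : k, g₀ ^ d = (c : k) := by
    have hxm : x ^ m = 1 := by rw [hm]; exact pow_orderOf_eq_one x
    rw [hx_def, ← QuotientGroup.mk_pow, hmem] at hxm
    obtain ⟨b, hb⟩ := hxm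
    have hb' : ((b : k) ^ d) ^ m = (c : k) ^ m := by
      rw [← pow_mul, mul_comm d m, hmd]
      exact_mod_cast congrArg (Units.val) hb
    have hbne : (b : k) ^ d ≠ 0 := pow_ne_zero _ b.ne_zero
    set ε : k := (c : k) * ((b : k) ^ d)⁻¹ with hε
    have hεm : ε ^ m = 1 := by
      rw [hε, mul_pow, inv_pow, hb', mul_inv_cancel₀ (pow_ne_zero _ c.ne_zero)]
    have hζd : IsPrimitiveRoot (ζ ^ d) m := hζ.pow hn (by rw [mul_comm]; exact hmd.symm)
    haveI : NeZero m := ⟨hm0.ne'⟩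
    obtain ⟨i, _, hi⟩ := hζd.eq_pow_of_pow_eq_one hεm
    refine ⟨ζ ^ i * (b : k), ?_⟩
    rw [mul_pow, ← pow_mul, mul_comm i d, pow_mul, hi, hε]
    field_simp
  obtain ⟨g₀, hg₀⟩ := hg₀
  -- the finset of d-th roots of c
  have hζm : IsPrimitiveRoot (ζ ^ m) d := hζ.pow hn hmd.symm
  have hnodup : (nthRoots d (c : k)).Nodup := hζm.nthRoots_nodup c.ne_zero
  refine ⟨(nthRoots d (c : k)).toFinset, ?_, ?_, ?_, ?_⟩
  · rw [Multiset.toFinset_card_of_nodup hnodup, hζm.card_nthRoots, if_pos ⟨g₀, hg₀⟩]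
  · intro g
    rw [Multiset.mem_toFinset, mem_nthRoots hd0]
  · -- factorization
    have h1 : (X ^ d - C (c : k) : k[X]) = ∏ g ∈ (nthRoots d (c : k)).toFinset, (X - C g) := by
      rw [(X_pow_sub_C_splits_of_isPrimitiveRoot hζm hg₀).eq_prod_roots_of_monic
        (monic_X_pow_sub_C _ hd0.ne')]
      have : (X ^ d - C (c : k) : k[X]).roots = nthRoots d (c : k) := rfl
      rw [this, Finset.prod_eq_multiset_prod, Multiset.toFinset_val,
        Multiset.dedup_eq_self.mpr hnodup]
    have h2 := congrArg (fun p : k[X] => p.comp (X ^ m)) h1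
    simp only [sub_comp, pow_comp, X_comp, C_comp, prod_comp] at h2
    rw [← pow_mul, hmd] at h2
    exact h2
  · intro g hg
    rw [Multiset.mem_toFinset, mem_nthRoots hd0] at hg
    exact kummer_key_irred hn hζ c hmd hm0 hmin hg
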